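/- Let s be a positive integer, let i_1 < ⋯ < i_s and j_1 < ⋯ < j_s be positive integers, and let a_1, …, a_s be independent variables. Then the determinant of the s×s matrix whose (u,v)-entry is C(a_u + i_u + j_v − 2, j_v − 1), viewed as a polynomial in a_1, …, a_s over ℚ, is divisible by the product ∏_{1 ≤ u < v ≤ s} ((a_v + i_v) − (a_u + i_u)). -/

import Mathlib

open MvPolynomial Finset

private lemma aux_prod_primes_dvd {α β : Type*} [CommMonoidWithZero α] [IsCancelMulZero α] [DecidableEq β]
    (P : Finset β) (f : β → α) :
    ∀ n : α, (∀ b ∈ P, Prime (f b)) → (∀ b ∈ P, f b ∣ n) →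
    (∀ b ∈ P, ∀ c ∈ P, b ≠ c → ¬ (f b ∣ f c)) → (∏ b ∈ P, f b) ∣ n := by
  induction P using Finset.induction_on with
  | empty => simp
  | @insert a P' ha ih =>
    intro n hp hd hna
    obtain ⟨k, rfl⟩ := hd a (Finset.mem_insert_self a P')
    rw [Finset.prod_insert ha]
    refine mul_dvd_mul_left _ (ih k ?_ ?_ ?_)
    · exact fun b hb => hp b (Finset.mem_insert_of_mem hb)
    · intro b hb
      have hbp := hp b (Finset.mem_insert_of_mem hb)
      have hdvd : f b ∣ f a * k := hd b (Finset.mem_insert_of_mem hb)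
      rcases hbp.dvd_or_dvd hdvd with h | h
      · exact absurd h (hna b (Finset.mem_insert_of_mem hb) a (Finset.mem_insert_self a P')
          (by rintro rfl; exact ha hb))
      · exact h
    · exact fun b hb c hc =>
        hna b (Finset.mem_insert_of_mem hb) c (Finset.mem_insert_of_mem hc)

theorem stmt7 (s : ℕ) (hs : 0 < s)
    (i j : Fin s → ℕ) (hi : StrictMono i) (hj : StrictMono j)
    (hipos : ∀ u, 0 < i u) (hjpos : ∀ v, 0 < j v) :
    (∏ u : Fin s, ∏ v ∈ Finset.univ.filter (fun v : Fin s => u < v),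
        ((MvPolynomial.X v + MvPolynomial.C ((i v : ℚ))) -
          (MvPolynomial.X u + MvPolynomial.C ((i u : ℚ))))) ∣
      Matrix.det (Matrix.of fun u v : Fin s =>
        MvPolynomial.C (1 / (Nat.factorial (j v - 1) : ℚ)) *
          ∏ t ∈ Finset.range (j v - 1),
            (MvPolynomial.X u + MvPolynomial.C ((i u : ℚ) + (j v : ℚ) - 2 - (t : ℚ)))) := by
  classical
  set y : Fin s → MvPolynomial (Fin s) ℚ :=
    fun u => MvPolynomial.X u + MvPolynomial.C ((i u : ℚ)) with hy
  set M : Matrix (Fin s) (Fin s) (MvPolynomial (Fin s) ℚ) := Matrix.of fun u v : Fin s =>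
        MvPolynomial.C (1 / (Nat.factorial (j v - 1) : ℚ)) *
          ∏ t ∈ Finset.range (j v - 1),
            (MvPolynomial.X u + MvPolynomial.C ((i u : ℚ) + (j v : ℚ) - 2 - (t : ℚ))) with hM
  set p : Fin s → Polynomial (MvPolynomial (Fin s) ℚ) := fun v' =>
    Polynomial.C (MvPolynomial.C (1 / (Nat.factorial (j v' - 1) : ℚ))) *
      ∏ t ∈ Finset.range (j v' - 1),
        (Polynomial.X + Polynomial.C (MvPolynomial.C ((j v' : ℚ) - 2 - (t : ℚ)))) with hp
  have hentry : ∀ w v' : Fin s, Polynomial.eval (y w) (p v') = M w v' := by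
    intro w v'
    simp only [hp, hM, Polynomial.eval_mul, Polynomial.eval_C, Polynomial.eval_prod,
      Polynomial.eval_add, Polynomial.eval_X, Matrix.of_apply]
    congr 1
    refine Finset.prod_congr rfl fun t _ => ?_
    rw [hy]
    rw [add_assoc, ← MvPolynomial.C_add]
    ring_nf
  -- each y v - y u divides det M
  have key : ∀ u v : Fin s, u ≠ v → (y v - y u) ∣ M.det := by
    intro u v huv
    have hrow : ∀ v', (y v - y u) ∣ (M v v' - M u v') := by
      intro v'
      rw [← hentry v v', ← hentry u v']
      exact Polynomial.sub_dvd_eval_sub _ _ _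
    choose c hc using hrow
    have hMeq : M.updateRow v (M u + (y v - y u) • c) = M := by
      ext w v'
      rcases eq_or_ne w v with rfl | hw
      · rw [Matrix.updateRow_self]
        simp only [Pi.add_apply, Pi.smul_apply, smul_eq_mul]
        rw [← (hc v')]
        ring_nf
      · rw [Matrix.updateRow_ne hw]
    have hdet : M.det = (M.updateRow v (M u + (y v - y u) • c)).det := by rw [hMeq]
    rw [hdet, Matrix.det_updateRow_add, Matrix.det_updateRow_smul,
      Matrix.det_updateRow_eq_zero huv, zero_add]
    exact dvd_mul_right _ _
  -- primality
  have hprime : ∀ u v : Fin s, u ≠ v → Prime (y v - y u) := by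
    intro u v huv
    let e := (MvPolynomial.renameEquiv ℚ (Equiv.optionSubtypeNe v).symm).trans
      (MvPolynomial.optionEquivLeft ℚ {w : Fin s // w ≠ v})
    have hC : ∀ q : ℚ, (MvPolynomial.optionEquivLeft ℚ {w : Fin s // w ≠ v})
        (MvPolynomial.C q) = Polynomial.C (MvPolynomial.C q) := by
      intro q
      have := (MvPolynomial.optionEquivLeft ℚ {w : Fin s // w ≠ v}).commutes q
      simpa [MvPolynomial.algebraMap_eq, Polynomial.algebraMap_eq] using this
    have he : e (y v - y u) =
        Polynomial.X - Polynomial.C (MvPolynomial.X ⟨u, huv⟩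
          + MvPolynomial.C ((i u : ℚ) - (i v : ℚ))) := by
      simp only [hy, map_sub, map_add, e, AlgEquiv.trans_apply, renameEquiv_apply, rename_X,
        rename_C, Equiv.optionSubtypeNe_symm_self, Equiv.optionSubtypeNe_symm_of_ne huv,
        optionEquivLeft_X_none, optionEquivLeft_X_some]
      rw [hC, hC]
      ring_nf
    have hpr : Prime (e (y v - y u)) := by rw [he]; exact Polynomial.prime_X_sub_C _
    exact (MulEquiv.prime_iff e).mp hpr
  -- pairwise non-divisibility
  have hnd : ∀ u v u' v' : Fin s, u < v → u' < v' → (u, v) ≠ (u', v') →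
      ¬ ((y v - y u) ∣ (y v' - y u')) := by
    intro u v u' v' huv huv' hne hdvd
    have hw : ∃ w : Fin s, (w = u' ∨ w = v') ∧ w ≠ u ∧ w ≠ v := by
      by_contra h
      push_neg at h
      have h1 := h u' (Or.inl rfl)
      have h2 := h v' (Or.inr rfl)
      rcases eq_or_ne u' u with h3 | h3
      · rcases eq_or_ne v' u with h4 | h4
        · rw [h3, h4] at huv'; exact lt_irrefl _ huv'
        · have h5 := h2 h4
          exact hne (by rw [h3, h5])
      · have h5 := h1 h3
        rcases eq_or_ne v' u with h4 | h4
        · rw [h4, h5] at huv'; exact absurd huv (not_lt.mpr (le_of_lt huv'))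
        · have h6 := h2 h4
          rw [h5, h6] at huv'; exact lt_irrefl _ huv'
    obtain ⟨w, hw1, hwu, hwv⟩ := hw
    set x : Fin s → ℚ := fun t => (if t = w then (1:ℚ) else 0) - (i t : ℚ) with hx
    have heval : ∀ t : Fin s, MvPolynomial.eval x (y t) = if t = w then 1 else 0 := by
      intro t
      simp [hy, hx]
    have h0 : MvPolynomial.eval x (y v - y u) = 0 := by
      rw [map_sub, heval, heval, if_neg (fun hh => hwv hh.symm),
        if_neg (fun hh => hwu hh.symm), sub_zero]
    have hnz : MvPolynomial.eval x (y v' - y u') ≠ 0 := by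
      rw [map_sub, heval, heval]
      have huv'ne : u' ≠ v' := ne_of_lt huv'
      rcases hw1 with rfl | rfl
      · rw [if_pos rfl, if_neg (fun hh => huv'ne hh.symm)]; norm_num
      · rw [if_pos rfl, if_neg huv'ne]; norm_num
    have := map_dvd (MvPolynomial.eval x) hdvd
    rw [h0, zero_dvd_iff] at this
    exact hnz this
  -- assemble
  set P : Finset (Fin s × Fin s) :=
    (Finset.univ ×ˢ Finset.univ).filter (fun b => b.1 < b.2) with hP
  have hgoalprod : (∏ u : Fin s, ∏ v ∈ Finset.univ.filter (fun v : Fin s => u < v),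
      (y v - y u)) = ∏ b ∈ P, (y b.2 - y b.1) := by
    rw [hP, Finset.prod_filter, Finset.univ_product_univ, Fintype.prod_prod_type]
    simp only [Finset.prod_filter]
  show (∏ u : Fin s, ∏ v ∈ Finset.univ.filter (fun v : Fin s => u < v), (y v - y u)) ∣ M.det
  rw [hgoalprod]
  refine aux_prod_primes_dvd P (fun b => y b.2 - y b.1) M.det ?_ ?_ ?_
  · intro b hb
    rw [hP, Finset.mem_filter] at hb
    exact hprime b.1 b.2 (ne_of_lt hb.2)
  · intro b hb
    rw [hP, Finset.mem_filter] at hb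
    exact key b.1 b.2 (ne_of_lt hb.2)
  · intro b hb c hc hbc
    rw [hP, Finset.mem_filter] at hb hc
    exact hnd b.1 b.2 c.1 c.2 hb.2 hc.2 (by
      intro hh
      apply hbc
      exact Prod.ext (congrArg Prod.fst hh) (congrArg Prod.snd hh))
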